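/- For any double star S(p,q) with 1 ≤ p ≤ q and order n = p + q + 2, the strong Roman domination number satisfies γ_{StR}(S(p,q)) < 6n/7. -/

import Mathlib

namespace SimpleGraph

variable {V : Type*}

/-- The degree of a vertex (cardinality of its open neighborhood). -/
noncomputable def deg (G : SimpleGraph V) (v : V) : ℕ := (G.neighborSet v).ncard

/-- Maximum degree. -/
noncomputable def maxDeg [Fintype V] (G : SimpleGraph V) : ℕ :=
  Finset.univ.sup fun v => G.deg v

/-- A strong Roman dominating function: `f : V → {0,1,...,⌈Δ/2⌉+1}` such that every vertex
with value 0 has a neighbor `w` with `f w ≥ 2` and `f w ≥ 1 + ⌈|N(w) ∩ B₀|/2⌉`. -/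
def IsStRDF [Fintype V] (G : SimpleGraph V) (f : V → ℕ) : Prop :=
  (∀ v, f v ≤ (G.maxDeg + 1) / 2 + 1) ∧
  ∀ v, f v = 0 → ∃ w, G.Adj v w ∧ 2 ≤ f w ∧
    1 + ((G.neighborSet w ∩ {u | f u = 0}).ncard + 1) / 2 ≤ f w

/-- The strong Roman domination number. -/
noncomputable def gammaStR [Fintype V] (G : SimpleGraph V) : ℕ :=
  sInf {k | ∃ f, G.IsStRDF f ∧ ∑ v, f v = k}

/-- A Roman dominating function. -/
def IsRDF (G : SimpleGraph V) (f : V → ℕ) : Prop :=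
  (∀ v, f v ≤ 2) ∧ ∀ v, f v = 0 → ∃ w, G.Adj v w ∧ f w = 2

/-- The Roman domination number. -/
noncomputable def gammaR [Fintype V] (G : SimpleGraph V) : ℕ :=
  sInf {k | ∃ f, G.IsRDF f ∧ ∑ v, f v = k}

/-- A dominating set. -/
def IsDomSet (G : SimpleGraph V) (D : Set V) : Prop :=
  ∀ v ∉ D, ∃ w ∈ D, G.Adj v w

/-- The domination number. -/
noncomputable def gammaDom [Fintype V] (G : SimpleGraph V) : ℕ :=
  sInf {k | ∃ D : Set V, G.IsDomSet D ∧ D.ncard = k}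

end SimpleGraph

private lemma two_comp {V : Type*} {G : SimpleGraph V} (hconn : G.Connected)
    {w x z : V} (hw : G.neighborSet w = {x}) (hx : G.neighborSet x = {w})
    (hzw : z ≠ w) (hzx : z ≠ x) : False := by
  have key : ∀ {b a : V}, G.Walk b a → (b = w ∨ b = x) → (a = w ∨ a = x) := by
    intro b a W
    induction W with
    | nil => exact id
    | @cons b c a h p ih =>
      intro hb
      apply ih
      rcases hb with rfl | rfl
      · right
        have hc : c ∈ G.neighborSet b := h
        rw [hw] at hc
        exact hc
      · left
        have hc : c ∈ G.neighborSet b := h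
        rw [hx] at hc
        exact hc
  obtain ⟨W⟩ := hconn.preconnected w z
  rcases key W (Or.inl rfl) with h | h
  · exact hzw h
  · exact hzx h

/-- For any double star `S(p,q)` with `1 ≤ p ≤ q` and order `n = p + q + 2`,
`γ_{StR}(S(p,q)) < 6n/7`. A double star is a tree with exactly two adjacent non-leaf
vertices `u` and `v`, where `u` has `p` leaf neighbors and `v` has `q` leaf neighbors. -/
theorem stmt9 {V : Type*} [Fintype V] (G : SimpleGraph V) (p q : ℕ)
    (hp : 1 ≤ p) (hpq : p ≤ q) (htree : G.IsTree)
    (u v : V) (huv : G.Adj u v)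
    (hu : G.deg u = p + 1) (hv : G.deg v = q + 1)
    (hleaf : ∀ w, w ≠ u → w ≠ v → G.deg w = 1)
    (hn : Fintype.card V = p + q + 2) :
    (G.gammaStR : ℚ) < 6 * (p + q + 2) / 7 := by
  classical
  have hconn : G.Connected := htree.isConnected
  have huvne : u ≠ v := huv.ne
  -- every leaf's unique neighbor is u or v
  have hleafnbr : ∀ w, w ≠ u → w ≠ v →
      ∃ x, G.neighborSet w = {x} ∧ (x = u ∨ x = v) := by
    intro w hwu hwv
    obtain ⟨x, hx⟩ := Set.ncard_eq_one.mp (hleaf w hwu hwv)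
    refine ⟨x, hx, ?_⟩
    by_contra hcon
    push_neg at hcon
    obtain ⟨hxu, hxv⟩ := hcon
    have hadjwx : G.Adj w x := by
      rw [← SimpleGraph.mem_neighborSet, hx]
      exact rfl
    have hxw : w ∈ G.neighborSet x := hadjwx.symm
    obtain ⟨y, hy⟩ := Set.ncard_eq_one.mp (hleaf x hxu hxv)
    rw [hy, Set.mem_singleton_iff] at hxw
    subst hxw
    exact two_comp hconn hx hy (Ne.symm hwu) (Ne.symm hxu)
  have hMax : q + 1 ≤ G.maxDeg := by
    rw [← hv]
    exact Finset.le_sup (Finset.mem_univ v)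
  have hvmem : v ∈ G.neighborSet u := huv
  have hNuv : (G.neighborSet u \ {v}).ncard = p := by
    rw [Set.ncard_diff_singleton_of_mem hvmem]
    have hu' : (G.neighborSet u).ncard = p + 1 := hu
    omega
  have key : ∃ K : ℕ, G.gammaStR ≤ K ∧ 7 * K < 6 * (p + q + 2) := by
    by_cases hcase : p = 1 ∧ q = 1
    · -- small case: weight-3 function
      obtain ⟨hp1, hq1⟩ := hcase
      rw [hp1] at hNuv
      obtain ⟨w₀, hw₀⟩ := Set.ncard_eq_one.mp hNuv
      have hw₀mem : w₀ ∈ G.neighborSet u \ {v} := by rw [hw₀]; exact rfl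
      have hw₀adj : G.Adj u w₀ := hw₀mem.1
      have hw₀v : w₀ ≠ v := hw₀mem.2
      have hw₀u : w₀ ≠ u := fun h => G.irrefl (h ▸ hw₀adj)
      have huniq : ∀ t, G.Adj u t → t ≠ v → t = w₀ := by
        intro t h1 h2
        have : t ∈ G.neighborSet u \ {v} := ⟨h1, h2⟩
        rw [hw₀] at this
        exact this
      set f : V → ℕ := fun w => (if w = v then 2 else 0) + (if w = w₀ then 1 else 0)
        with hfdef
      have hfv : f v = 2 := by simp [hfdef, Ne.symm hw₀v]
      have hfw₀ : f w₀ = 1 := by simp [hfdef, hw₀v]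
      have hbound : 1 + ((G.neighborSet v ∩ {t | f t = 0}).ncard + 1) / 2 ≤ f v := by
        have hsub : G.neighborSet v ∩ {t | f t = 0} ⊆ G.neighborSet v :=
          Set.inter_subset_left
        have hm : (G.neighborSet v ∩ {t | f t = 0}).ncard ≤ q + 1 := by
          rw [← hv]
          exact Set.ncard_le_ncard hsub (Set.toFinite _)
        rw [hfv]
        omega
      have hstr : G.IsStRDF f := by
        constructor
        · intro w
          have h2 : f w ≤ 2 := by
            by_cases h1 : w = v
            · rw [h1, hfv]
            · by_cases h2 : w = w₀
              · rw [h2, hfw₀]; omega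
              · have h0 : f w = 0 := by simp [hfdef, h1, h2]
                omega
          have hM := hMax
          omega
        · intro w hw0
          have hwv : w ≠ v := by intro h; rw [h, hfv] at hw0; omega
          have hww₀ : w ≠ w₀ := by intro h; rw [h, hfw₀] at hw0; omega
          have hadjwv : G.Adj w v := by
            by_cases hwu : w = u
            · rw [hwu]; exact huv
            · obtain ⟨x, hxset, hx⟩ := hleafnbr w hwu hwv
              have hadjwx : G.Adj w x := by
                rw [← SimpleGraph.mem_neighborSet, hxset]; exact rfl
              rcases hx with hx | hx
              · rw [hx] at hadjwx
                exact absurd (huniq w hadjwx.symm hwv) hww₀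
              · rw [hx] at hadjwx
                exact hadjwx
          exact ⟨v, hadjwv, by rw [hfv], hbound⟩
      have hsum : ∑ w, f w = 3 := by
        simp only [hfdef]
        rw [Finset.sum_add_distrib, Finset.sum_ite_eq' Finset.univ v,
          Finset.sum_ite_eq' Finset.univ w₀]
        simp
      refine ⟨3, Nat.sInf_le ⟨f, hstr, hsum⟩, by omega⟩
    · -- general case: values on both centers
      have hs : 3 ≤ p + q := by omega
      set a : ℕ := 1 + (p + 1) / 2 with hadef
      set b : ℕ := 1 + (q + 1) / 2 with hbdef
      set f : V → ℕ := fun w => (if w = u then a else 0) + (if w = v then b else 0)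
        with hfdef
      have hfu : f u = a := by simp [hfdef, huvne]
      have hfv : f v = b := by simp [hfdef, Ne.symm huvne]
      have humem : u ∈ G.neighborSet v := huv.symm
      have hNvu : (G.neighborSet v \ {u}).ncard = q := by
        rw [Set.ncard_diff_singleton_of_mem humem]
        have hv' : (G.neighborSet v).ncard = q + 1 := hv
        omega
      have hstr : G.IsStRDF f := by
        constructor
        · intro w
          by_cases h1 : w = u
          · rw [h1, hfu]; simp only [hadef]; omega
          by_cases h2 : w = v
          · rw [h2, hfv]; simp only [hbdef]; omega
          · have : f w = 0 := by simp [hfdef, h1, h2]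
            omega
        · intro w hw0
          have hwu : w ≠ u := by
            intro h; rw [h, hfu] at hw0; simp only [hadef] at hw0; omega
          have hwv : w ≠ v := by
            intro h; rw [h, hfv] at hw0; simp only [hbdef] at hw0; omega
          obtain ⟨x, hxset, hx⟩ := hleafnbr w hwu hwv
          have hadjwx : G.Adj w x := by
            rw [← SimpleGraph.mem_neighborSet, hxset]; exact rfl
          rcases hx with hx | hx
          · rw [hx] at hadjwx
            refine ⟨u, hadjwx, ?_, ?_⟩
            · rw [hfu]; simp only [hadef]; omega
            · have hsub : G.neighborSet u ∩ {t | f t = 0} ⊆ G.neighborSet u \ {v} := by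
                intro t ⟨ht1, ht2⟩
                refine ⟨ht1, ?_⟩
                intro htv
                rw [Set.mem_singleton_iff] at htv
                rw [htv] at ht2
                have : f v = 0 := ht2
                rw [hfv] at this
                simp only [hbdef] at this
                omega
              have hm : (G.neighborSet u ∩ {t | f t = 0}).ncard ≤ p := by
                rw [← hNuv]
                exact Set.ncard_le_ncard hsub (Set.toFinite _)
              rw [hfu]
              simp only [hadef]
              omega
          · rw [hx] at hadjwx
            refine ⟨v, hadjwx, ?_, ?_⟩
            · rw [hfv]; simp only [hbdef]; omega
            · have hsub : G.neighborSet v ∩ {t | f t = 0} ⊆ G.neighborSet v \ {u} := by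
                intro t ⟨ht1, ht2⟩
                refine ⟨ht1, ?_⟩
                intro htu
                rw [Set.mem_singleton_iff] at htu
                rw [htu] at ht2
                have : f u = 0 := ht2
                rw [hfu] at this
                simp only [hadef] at this
                omega
              have hm : (G.neighborSet v ∩ {t | f t = 0}).ncard ≤ q := by
                rw [← hNvu]
                exact Set.ncard_le_ncard hsub (Set.toFinite _)
              rw [hfv]
              simp only [hbdef]
              omega
      have hsum : ∑ w, f w = a + b := by
        simp only [hfdef]
        rw [Finset.sum_add_distrib, Finset.sum_ite_eq' Finset.univ u,
          Finset.sum_ite_eq' Finset.univ v]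
        simp
      refine ⟨a + b, Nat.sInf_le ⟨f, hstr, hsum⟩, ?_⟩
      simp only [hadef, hbdef]
      omega
  obtain ⟨K, hle, h7⟩ := key
  have h1 : (G.gammaStR : ℚ) ≤ K := Nat.cast_le.mpr hle
  have h2 : (7 : ℚ) * K < 6 * (p + q + 2) := by exact_mod_cast h7
  rw [lt_div_iff₀ (by norm_num : (0 : ℚ) < 7)]
  push_cast at h2 ⊢
  linarith
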